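/- Let H be a complex Hilbert space, K a bounded self-adjoint operator on H, and J an antilinear isometric involution on H such that J ∘ K = −K ∘ J. Let c : ℝ → ℝ be the continuous function c(λ) = √(λ/(1 − e^{−λ})) for λ ≠ 0 and c(0) = 1, and let c(K) be defined by continuous functional calculus. Then, as a real-linear bounded operator on H, the difference c(K) ∘ (id − J) ∘ c(K) − c(K)² has operator norm at most 1. -/

import Mathlib

/-- The function `c(λ) = √(λ/(1−e^{−λ}))` for `λ ≠ 0`, extended by continuity with `c(0) = 1`. -/
noncomputable def entropyCFun : ℝ → ℝ :=
  fun l => if l = 0 then 1 else Real.sqrt (l / (1 - Real.exp (-l)))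



lemma one_sub_exp_neg_ne_zero {l : ℝ} (hl : l ≠ 0) : 1 - Real.exp (-l) ≠ 0 := by
  intro h
  have : Real.exp (-l) = 1 := by linarith
  rw [Real.exp_eq_one_iff] at this
  exact hl (by linarith)

lemma ratio_nonneg (l : ℝ) : 0 ≤ l / (1 - Real.exp (-l)) := by
  rcases lt_trichotomy l 0 with h | h | h
  · apply div_nonneg_of_nonpos h.le
    have : (1:ℝ) < Real.exp (-l) := by
      rw [← Real.exp_zero]; exact Real.exp_lt_exp.mpr (by linarith)
    linarith
  · simp [h]
  · apply div_nonneg h.le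
    have : Real.exp (-l) < 1 := by
      rw [← Real.exp_zero]; exact Real.exp_lt_exp.mpr (by linarith)
    linarith

lemma entropyCFun_nonneg (l : ℝ) : 0 ≤ entropyCFun l := by
  unfold entropyCFun
  split
  · norm_num
  · exact Real.sqrt_nonneg _

lemma entropyCFun_mul_neg_le_one (l : ℝ) : entropyCFun l * entropyCFun (-l) ≤ 1 := by
  rcases eq_or_ne l 0 with rfl | hl
  · simp [entropyCFun]
  · have hl' : -l ≠ 0 := neg_ne_zero.mpr hl
    rw [entropyCFun, entropyCFun, if_neg hl, if_neg hl', ← Real.sqrt_mul (ratio_nonneg l),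
      neg_neg]
    rw [Real.sqrt_le_one]
    -- key inequality
    have h1 : 1 - Real.exp (-l) ≠ 0 := one_sub_exp_neg_ne_zero hl
    have h2 : 1 - Real.exp l ≠ 0 := by simpa using one_sub_exp_neg_ne_zero hl'
    have hD : (1 - Real.exp (-l)) * (1 - Real.exp l) = -(2 * Real.sinh (l/2))^2 := by
      have e1 : Real.exp l = Real.exp (l/2) * Real.exp (l/2) := by
        rw [← Real.exp_add]; ring_nf
      have e2 : Real.exp (-l) = Real.exp (-(l/2)) * Real.exp (-(l/2)) := by
        rw [← Real.exp_add]; ring_nf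
      have e3 : Real.exp (l/2) * Real.exp (-(l/2)) = 1 := by
        rw [← Real.exp_add]; simp
      rw [Real.sinh_eq]
      nlinarith [e1, e2, e3]
    have hsinh : l^2 ≤ (2 * Real.sinh (l/2))^2 := by
      have habs : |l| ≤ |2 * Real.sinh (l/2)| := by
        have h4 : |l|/2 ≤ Real.sinh (|l|/2) := Real.self_le_sinh_iff.mpr (by positivity)
        have h5 : |Real.sinh (l/2)| = Real.sinh (|l|/2) := by
          rcases le_or_gt 0 l with h | h
          · rw [abs_of_nonneg h, abs_of_nonneg (Real.sinh_nonneg_iff.mpr (by linarith))]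
          · rw [abs_of_neg h, abs_of_neg (Real.sinh_neg_iff.mpr (by linarith)), ← Real.sinh_neg]
            ring_nf
        rw [abs_mul, h5]
        norm_num
        linarith
      calc l^2 = |l|^2 := (sq_abs l).symm
        _ ≤ |2 * Real.sinh (l/2)|^2 := by
            apply pow_le_pow_left₀ (abs_nonneg _) habs
        _ = (2 * Real.sinh (l/2))^2 := sq_abs _
    have hDpos : 0 < (2 * Real.sinh (l/2))^2 := by
      have : Real.sinh (l/2) ≠ 0 := by
        simp only [ne_eq, Real.sinh_eq_zero]
        intro h; exact hl (by linarith)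
      positivity
    have key : l / (1 - Real.exp (-l)) * (-l / (1 - Real.exp l)) = l^2 / (2 * Real.sinh (l/2))^2 := by
      field_simp
      nlinarith [hD]
    rw [key]
    exact div_le_one_of_le₀ hsinh hDpos.le

lemma entropyCFun_continuous : Continuous entropyCFun := by
  rw [continuous_iff_continuousAt]
  intro x
  rcases eq_or_ne x 0 with rfl | hx
  · -- continuity at 0
    have hderiv : HasDerivAt (fun l : ℝ => 1 - Real.exp (-l)) 1 0 := by
      have h1 : HasDerivAt (fun l : ℝ => Real.exp (-l)) (-1) 0 := by
        have := (Real.hasDerivAt_exp (-0)).comp 0 (hasDerivAt_neg 0)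
        simpa [Function.comp_def] using this
      simpa [Pi.sub_def] using (hasDerivAt_const 0 (1:ℝ)).sub h1
    have hslope := hasDerivAt_iff_tendsto_slope.mp hderiv
    have hslope' : Filter.Tendsto (fun l : ℝ => (1 - Real.exp (-l)) / l) (nhdsWithin 0 {0}ᶜ) (nhds 1) := by
      refine hslope.congr (fun l => ?_)
      simp [slope_def_field]
    have hratio : Filter.Tendsto (fun l : ℝ => l / (1 - Real.exp (-l))) (nhdsWithin 0 {0}ᶜ) (nhds 1) := by
      have := hslope'.inv₀ one_ne_zero
      simpa [one_div] using this.congr (fun l => by rw [inv_div])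
    have hsqrt : Filter.Tendsto (fun l : ℝ => Real.sqrt (l / (1 - Real.exp (-l)))) (nhdsWithin 0 {0}ᶜ) (nhds 1) := by
      have := (Real.continuous_sqrt.continuousAt (x := (1:ℝ))).tendsto.comp hratio
      simpa [Function.comp_def] using this
    have hteq : Filter.Tendsto entropyCFun (nhdsWithin 0 {0}ᶜ) (nhds 1) := by
      refine hsqrt.congr' ?_
      filter_upwards [self_mem_nhdsWithin] with l hl
      simp only [Set.mem_compl_iff, Set.mem_singleton_iff] at hl
      simp [entropyCFun, hl]
    have : ContinuousAt entropyCFun 0 := by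
      unfold ContinuousAt
      have h0 : entropyCFun 0 = 1 := by simp [entropyCFun]
      rw [h0, ← nhdsNE_sup_pure]
      exact hteq.sup (by simpa [h0] using tendsto_pure_nhds entropyCFun 0)
    exact this
  · have hne : ∀ᶠ l in nhds x, l ≠ 0 := by
      exact eventually_ne_nhds hx
    have hcont : ContinuousAt (fun l : ℝ => Real.sqrt (l / (1 - Real.exp (-l)))) x := by
      apply Real.continuous_sqrt.continuousAt.comp
      exact (continuousAt_id.div (by fun_prop) (one_sub_exp_neg_ne_zero hx))
    refine hcont.congr ?_
    filter_upwards [hne] with l hl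
    simp [entropyCFun, hl]

open scoped ComplexConjugate

section
variable {H : Type*} [NormedAddCommGroup H] [InnerProductSpace ℂ H] [CompleteSpace H]

local notation "⟪" x ", " y "⟫" => @inner ℂ _ _ x y

theorem entropy_operator_bound'
    (K : H →L[ℂ] H) (hK : IsSelfAdjoint K)
    (J : H → H)
    (hadd : ∀ x y : H, J (x + y) = J x + J y)
    (hsmul : ∀ (c : ℂ) (x : H), J (c • x) = (starRingEnd ℂ c) • J x)
    (hinv : ∀ x : H, J (J x) = x)
    (hiso : ∀ x : H, ‖J x‖ = ‖x‖)
    (hanti : ∀ x : H, J (K x) = -(K (J x))) :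
    ∀ x : H,
      ‖cfc entropyCFun K (cfc entropyCFun K x - J (cfc entropyCFun K x))
        - cfc entropyCFun K (cfc entropyCFun K x)‖ ≤ ‖x‖ := by
  -- inner product identity
  have hre : ∀ x y : H, Complex.re ⟪J x, J y⟫ = Complex.re ⟪x, y⟫ := by
    intro x y
    have e1 := norm_add_sq (𝕜 := ℂ) (J x) (J y)
    have e2 := norm_add_sq (𝕜 := ℂ) x y
    rw [← hadd, hiso, hiso, hiso] at e1
    have := e1.symm.trans e2
    simp only [RCLike.re_to_complex] at *
    nlinarith [this]
  have hJinner : ∀ x y : H, ⟪J x, J y⟫ = ⟪y, x⟫ := by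
    intro x y
    have him : Complex.im ⟪J x, J y⟫ = -Complex.im ⟪x, y⟫ := by
      have h1 := hre x (Complex.I • y)
      rw [hsmul, inner_smul_right, inner_smul_right] at h1
      simp only [Complex.conj_I, smul_eq_mul] at h1
      simp [Complex.mul_re] at h1
      linarith
    have hcs : ⟪y, x⟫ = conj ⟪x, y⟫ := (inner_conj_symm y x).symm
    apply Complex.ext
    · rw [hcs, Complex.conj_re]; exact hre x y
    · rw [hcs, Complex.conj_im]; exact him
  -- J as a continuous conjugate-linear map
  let Jl : H →ₛₗ[starRingEnd ℂ] H :=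
    { toFun := J, map_add' := hadd, map_smul' := hsmul }
  let Jc : H →SL[starRingEnd ℂ] H :=
    Jl.mkContinuous 1 (fun x => by rw [one_mul]; exact (hiso x).le)
  have hJc : ∀ x, Jc x = J x := fun x => rfl
  -- the conjugation map Φ T = J ∘ T ∘ J as a real star-algebra homomorphism
  let Φ : (H →L[ℂ] H) →⋆ₐ[ℝ] (H →L[ℂ] H) :=
    { toFun := fun T => Jc.comp (T.comp Jc)
      map_one' := by ext x; simp [hJc, hinv]
      map_mul' := fun T S => by ext x; simp [hJc, hinv]
      map_zero' := by
        ext x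
        have h0 : J 0 = 0 := by simpa using hsmul 0 0
        simp [hJc, h0]
      map_add' := fun T S => by ext x; simp [hJc, hadd]
      commutes' := fun r => by
        ext x
        simp only [ContinuousLinearMap.comp_apply, hJc, Algebra.algebraMap_eq_smul_one,
          ContinuousLinearMap.smul_apply, ContinuousLinearMap.one_apply]
        rw [show (r : ℝ) • (J x) = ((r : ℂ)) • (J x) by simp, hsmul]
        simp [hinv]
      map_star' := fun T => by
        rw [ContinuousLinearMap.star_eq_adjoint, ContinuousLinearMap.star_eq_adjoint]
        rw [ContinuousLinearMap.eq_adjoint_iff]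
        intro x y
        simp only [ContinuousLinearMap.comp_apply, hJc]
        calc ⟪J ((ContinuousLinearMap.adjoint T) (J x)), y⟫
            = ⟪J ((ContinuousLinearMap.adjoint T) (J x)), J (J y)⟫ := by rw [hinv]
          _ = ⟪J y, (ContinuousLinearMap.adjoint T) (J x)⟫ := hJinner _ _
          _ = ⟪T (J y), J x⟫ := ContinuousLinearMap.adjoint_inner_right T _ _
          _ = ⟪J (J (T (J y))), J x⟫ := by rw [hinv]
          _ = ⟪x, J (T (J y))⟫ := hJinner _ _ }
  have hΦ : ∀ (T : H →L[ℂ] H) (x : H), Φ T x = J (T (J x)) := fun T x => rfl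
  -- Φ is continuous
  have hΦnorm : ∀ T : H →L[ℂ] H, ‖Φ T‖ ≤ ‖T‖ := by
    intro T
    apply ContinuousLinearMap.opNorm_le_bound _ (norm_nonneg T)
    intro x
    rw [hΦ, hiso, ← hiso x]
    exact T.le_opNorm (J x)
  have hΦcont : Continuous Φ := by
    refine (LipschitzWith.of_dist_le_mul (K := 1) fun T S => ?_).continuous
    rw [dist_eq_norm, dist_eq_norm, ← map_sub]
    simpa using hΦnorm (T - S)
  -- Φ K = -K
  have hΦK : Φ K = -K := by
    ext x
    rw [hΦ, hanti, hinv]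
    simp
  -- Φ of the functional calculus
  have hKey : Φ (cfc entropyCFun K) = cfc (fun l => entropyCFun (-l)) K := by
    have h1 : Φ (cfc entropyCFun K) = cfc entropyCFun (Φ K) :=
      StarAlgHom.map_cfc Φ entropyCFun K (entropyCFun_continuous.continuousOn) hΦcont hK
        (by rw [hΦK]; exact hK.neg)
    rw [h1, hΦK, ← cfc_comp_neg entropyCFun K (entropyCFun_continuous.continuousOn) hK]
  -- final assembly
  intro x
  set A := cfc entropyCFun K with hA
  have h1 : A (A x - J (A x)) - A (A x) = -(A (J (A x))) := by
    rw [map_sub]; abel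
  rw [h1, norm_neg]
  have h2 : J (A x) = Φ A (J x) := by rw [hΦ, hinv]
  rw [h2]
  have h3 : A ((Φ A) (J x)) = (A * Φ A) (J x) := rfl
  have h4 : A * Φ A = cfc (fun l => entropyCFun l * entropyCFun (-l)) K := by
    rw [hA, hKey]
    exact (cfc_mul entropyCFun (fun l => entropyCFun (-l)) K
      (entropyCFun_continuous.continuousOn)
      ((entropyCFun_continuous.comp continuous_neg).continuousOn)).symm
  rw [h3, h4]
  have h5 : ‖cfc (fun l => entropyCFun l * entropyCFun (-l)) K‖ ≤ 1 := by
    apply norm_cfc_le zero_le_one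
    intro l _
    rw [Real.norm_eq_abs,
      abs_of_nonneg (mul_nonneg (entropyCFun_nonneg l) (entropyCFun_nonneg (-l)))]
    exact entropyCFun_mul_neg_le_one l
  calc ‖(cfc (fun l => entropyCFun l * entropyCFun (-l)) K) (J x)‖
      ≤ ‖cfc (fun l => entropyCFun l * entropyCFun (-l)) K‖ * ‖J x‖ :=
        ContinuousLinearMap.le_opNorm _ _
    _ ≤ 1 * ‖x‖ := by rw [hiso]; exact mul_le_mul_of_nonneg_right h5 (norm_nonneg x)
    _ = ‖x‖ := one_mul _

end


/-- Let `K` be a bounded self-adjoint operator on a complex Hilbert space `H` and `J` an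
antilinear isometric involution with `J ∘ K = −K ∘ J`. Then the real-linear operator
`c(K)(id − J)c(K) − c(K)²`, with `c(K)` given by continuous functional calculus, has operator
norm at most `1`, i.e. `‖(c(K)(1−J)c(K) − c(K)²) x‖ ≤ ‖x‖` for all `x`. -/
theorem entropy_operator_bound
    {H : Type*} [NormedAddCommGroup H] [InnerProductSpace ℂ H] [CompleteSpace H]
    (K : H →L[ℂ] H) (hK : IsSelfAdjoint K)
    (J : H → H)
    (hadd : ∀ x y : H, J (x + y) = J x + J y)
    (hsmul : ∀ (c : ℂ) (x : H), J (c • x) = (starRingEnd ℂ c) • J x)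
    (hinv : ∀ x : H, J (J x) = x)
    (hiso : ∀ x : H, ‖J x‖ = ‖x‖)
    (hanti : ∀ x : H, J (K x) = -(K (J x))) :
    ∀ x : H,
      ‖cfc entropyCFun K (cfc entropyCFun K x - J (cfc entropyCFun K x))
        - cfc entropyCFun K (cfc entropyCFun K x)‖ ≤ ‖x‖ :=
  entropy_operator_bound' K hK J hadd hsmul hinv hiso hanti
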